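/- arXiv:2107.08626 — 6 statements merged into one kernel-verified Lean document; each statement's English description precedes it below -/
import Mathlib

section
/- Let n ≥ 3, let v : Fin n → ℝ be injective (pairwise distinct velocity nodes), let h : Fin n → ℝ satisfy h_j > 0 for all j, and let Δv > 0. Let C be the 3×n real matrix whose rows are (h_j Δv)_j, (h_j v_j Δv)_j and (h_j v_j²/2 · Δv)_j. Then the 3×3 matrix C·Cᵀ is symmetric and positive definite; in particular C·Cᵀ is invertible. -/
open Matrix Finset

lemma quad_vanish_three {a b c t0 t1 t2 : ℝ} (h01 : t0 ≠ t1) (h02 : t0 ≠ t2) (h12 : t1 ≠ t2)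
    (e0 : a + b * t0 + c * t0 ^ 2 = 0) (e1 : a + b * t1 + c * t1 ^ 2 = 0)
    (e2 : a + b * t2 + c * t2 ^ 2 = 0) : a = 0 ∧ b = 0 ∧ c = 0 := by
  have k01 : (t0 - t1) * (b + c * (t0 + t1)) = 0 := by ring_nf; nlinarith [e0, e1]
  have k12 : (t1 - t2) * (b + c * (t1 + t2)) = 0 := by ring_nf; nlinarith [e1, e2]
  have h01' : t0 - t1 ≠ 0 := sub_ne_zero.mpr h01
  have h12' : t1 - t2 ≠ 0 := sub_ne_zero.mpr h12
  have p01 : b + c * (t0 + t1) = 0 := by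
    rcases mul_eq_zero.mp k01 with h | h
    · exact absurd h h01'
    · exact h
  have p12 : b + c * (t1 + t2) = 0 := by
    rcases mul_eq_zero.mp k12 with h | h
    · exact absurd h h12'
    · exact h
  have hc : c * (t0 - t2) = 0 := by linarith
  have hc0 : c = 0 := by
    rcases mul_eq_zero.mp hc with h | h
    · exact h
    · exact absurd (sub_eq_zero.mp h) h02
  rw [hc0] at p01
  have hb0 : b = 0 := by simpa using p01
  rw [hb0, hc0] at e0
  exact ⟨by simpa using e0, hb0, hc0⟩

/-- The constraint matrix `C` of the weighted `L²`-minimization, whose rows are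
`(h_j Δv)_j`, `(h_j v_j Δv)_j` and `(h_j v_j²/2 · Δv)_j` for positive weights `h_j`,
positive mesh `Δv` and at least three pairwise distinct velocity nodes `v_j`,
yields a symmetric positive definite (hence invertible) matrix `C·Cᵀ`. -/
theorem stmt_2 {n : ℕ} (hn : 3 ≤ n) (v : Fin n → ℝ) (hv : Function.Injective v)
    (h : Fin n → ℝ) (hh : ∀ j, 0 < h j) (Δv : ℝ) (hΔv : 0 < Δv) :
    let C : Matrix (Fin 3) (Fin n) ℝ :=
      Matrix.of fun i j => h j * (![(1 : ℝ), v j, (v j) ^ 2 / 2] i) * Δv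
    (C * Cᵀ).IsSymm ∧ (C * Cᵀ).PosDef ∧ IsUnit (C * Cᵀ) := by
  intro C
  have hpd : (C * Cᵀ).PosDef := by
    rw [Matrix.posDef_iff_dotProduct_mulVec]
    constructor
    · -- Hermitian
      ext i j
      simp [Matrix.conjTranspose, Matrix.mul_apply, Matrix.transpose_apply, mul_comm]
    · intro x hx
      have key : (C * Cᵀ) *ᵥ x = C *ᵥ (Cᵀ *ᵥ x) := by
        rw [Matrix.mulVec_mulVec]
      rw [key]
      have hstar : (star x : Fin 3 → ℝ) = x := by
        ext i; simp
      rw [hstar]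
      have hdp : x ⬝ᵥ (C *ᵥ (Cᵀ *ᵥ x)) = (Cᵀ *ᵥ x) ⬝ᵥ (Cᵀ *ᵥ x) := by
        rw [Matrix.dotProduct_mulVec, ← Matrix.mulVec_transpose]
      rw [hdp]
      have hy : Cᵀ *ᵥ x ≠ 0 := by
        intro hy0
        apply hx
        -- each node gives h j * Δv * (x0 + x1 v j + x2 v j^2 / 2) = 0
        have hnode : ∀ j : Fin n, x 0 + x 1 * v j + (x 2 / 2) * v j ^ 2 = 0 := by
          intro j
          have := congrFun hy0 j
          simp only [Matrix.mulVec, Matrix.transpose_apply, dotProduct,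
            Fin.sum_univ_three, C, Matrix.of_apply, Pi.zero_apply, Matrix.cons_val_zero,
            Matrix.cons_val_one, Matrix.head_cons, Matrix.cons_val_two,
            Matrix.tail_cons] at this
          have hhd : h j * Δv ≠ 0 := ne_of_gt (mul_pos (hh j) hΔv)
          have : h j * Δv * (x 0 + x 1 * v j + (x 2 / 2) * v j ^ 2) = 0 := by
            ring_nf; ring_nf at this; linarith
          exact (mul_eq_zero.mp this).resolve_left hhd
        have d01 : v ⟨0, by omega⟩ ≠ v ⟨1, by omega⟩ := fun e => by
          simpa [Fin.ext_iff] using hv e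
        have d02 : v ⟨0, by omega⟩ ≠ v ⟨2, by omega⟩ := fun e => by
          simpa [Fin.ext_iff] using hv e
        have d12 : v ⟨1, by omega⟩ ≠ v ⟨2, by omega⟩ := fun e => by
          simpa [Fin.ext_iff] using hv e
        obtain ⟨ha, hb, hc⟩ := quad_vanish_three d01 d02 d12 (hnode ⟨0, by omega⟩)
          (hnode ⟨1, by omega⟩) (hnode ⟨2, by omega⟩)
        funext i
        fin_cases i
        · exact ha
        · exact hb
        · simpa using (by linarith : x 2 = 0)
      have hnn : 0 ≤ (Cᵀ *ᵥ x) ⬝ᵥ (Cᵀ *ᵥ x) :=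
        Finset.sum_nonneg fun i _ => mul_self_nonneg _
      exact lt_of_le_of_ne hnn fun e => hy (dotProduct_self_eq_zero.mp e.symm)
  refine ⟨?_, hpd, hpd.isUnit⟩
  · ext i j
    simp [Matrix.mul_apply, Matrix.transpose_apply, mul_comm]
end

section
/- Let ρ > 0, T > 0, U ∈ ℝ and let M(v) = ρ/√(2πT) · exp(−(v−U)²/(2T)). Let f : ℝ → ℝ be measurable with f ≥ 0, such that f, v·f, v²·f, f·log f and f·log M are integrable, and suppose f has the same first three moments as M: ∫_ℝ f dv = ρ, ∫_ℝ v·f(v) dv = ρU, ∫_ℝ v²·f(v) dv = ρU² + ρT. Then ∫_ℝ f(v)·log f(v) dv ≥ ∫_ℝ M(v)·log M(v) dv; i.e., among all nonnegative densities with prescribed mass, momentum and energy, the Maxwellian minimizes the entropy functional H(f) = ∫ f log f dv. -/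
open MeasureTheory Real

open Filter Asymptotics in
lemma integral_sq_gaussian {b : ℝ} (hb : 0 < b) :
    ∫ x : ℝ, x ^ 2 * Real.exp (-b * x ^ 2) = Real.sqrt (π / b) / (2 * b) := by
  have hb' : (2 * b) ≠ 0 := by positivity
  set g : ℝ → ℝ := fun x => -(2 * b)⁻¹ * x * Real.exp (-b * x ^ 2) with hg
  set g' : ℝ → ℝ := fun x =>
    x ^ 2 * Real.exp (-b * x ^ 2) - (2 * b)⁻¹ * Real.exp (-b * x ^ 2) with hg'
  have hA : ∀ x, HasDerivAt g (g' x) x := by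
    intro x
    have h1 : HasDerivAt (fun x : ℝ => -(2 * b)⁻¹ * x) (-(2 * b)⁻¹) x := by
      simpa using (hasDerivAt_id x).const_mul (-(2 * b)⁻¹)
    have h2 : HasDerivAt (fun x : ℝ => Real.exp (-b * x ^ 2))
        (Real.exp (-b * x ^ 2) * (-b * (2 * x ^ 1))) x := by
      simpa using ((hasDerivAt_pow 2 x).const_mul (-b)).exp
    refine (h1.mul h2).congr_deriv ?_
    simp only [hg']
    field_simp
    ring
  have hint2 : Integrable (fun x : ℝ => x ^ 2 * Real.exp (-b * x ^ 2)) := by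
    have := integrable_rpow_mul_exp_neg_mul_sq hb (s := 2) (by norm_num)
    simpa [Real.rpow_two] using this
  have hintg' : Integrable g' := hint2.sub ((integrable_exp_neg_mul_sq hb).const_mul _)
  have hexp : Tendsto (fun x : ℝ => Real.exp (-(1 / 2) * x)) atTop (nhds 0) :=
    Real.tendsto_exp_atBot.comp (tendsto_id.const_mul_atTop_of_neg (by norm_num))
  have htop : Tendsto g atTop (nhds 0) := by
    have h5 : Tendsto (fun x : ℝ => x ^ (1 : ℝ) * Real.exp (-b * x ^ 2)) atTop (nhds 0) :=
      (rpow_mul_exp_neg_mul_sq_isLittleO_exp_neg hb 1).tendsto_zero_of_tendsto hexp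
    have h6 : Tendsto (fun x : ℝ => -(2 * b)⁻¹ * (x ^ (1 : ℝ) * Real.exp (-b * x ^ 2)))
        atTop (nhds (-(2 * b)⁻¹ * 0)) := h5.const_mul _
    simp only [mul_zero] at h6
    refine h6.congr fun x => ?_
    simp [hg, Real.rpow_one, mul_assoc]
  have hbot : Tendsto g atBot (nhds 0) := by
    have h6 : Tendsto (fun x : ℝ => g (-x)) atBot (nhds 0) :=
      htop.comp tendsto_neg_atBot_atTop
    have h7 : (fun x : ℝ => -g (-x)) = g := by
      funext x; simp only [hg]; ring
    have := h6.neg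
    rw [neg_zero] at this
    rwa [h7] at this
  have h1 : ∫ x in Set.Ioi (0:ℝ), g' x = 0 - g 0 :=
    integral_Ioi_of_hasDerivAt_of_tendsto' (fun x _ => hA x) hintg'.integrableOn htop
  have h2 : ∫ x in Set.Iic (0:ℝ), g' x = g 0 - 0 :=
    integral_Iic_of_hasDerivAt_of_tendsto' (fun x _ => hA x) hintg'.integrableOn hbot
  have h3 : ∫ x : ℝ, g' x = 0 := by
    rw [← intervalIntegral.integral_Iic_add_Ioi (b := (0:ℝ)) hintg'.integrableOn hintg'.integrableOn, h1, h2]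
    ring
  have h4 : ∫ x : ℝ, g' x =
      (∫ x : ℝ, x ^ 2 * Real.exp (-b * x ^ 2)) - (2 * b)⁻¹ * ∫ x : ℝ, Real.exp (-b * x ^ 2) := by
    simp only [hg']
    rw [integral_sub hint2 ((integrable_exp_neg_mul_sq hb).const_mul _), integral_const_mul]
  rw [h4, integral_gaussian] at h3
  rw [div_eq_mul_inv, mul_comm]
  linarith

/-- Entropy-minimization property of the Maxwellian: among all nonnegative densities `f`
with the same mass, momentum and energy as the Maxwellian `M`, the Maxwellian minimizes
the entropy functional `H(f) = ∫ f log f dv` (with the convention `0·log 0 = 0`,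
which holds automatically since `Real.log 0 = 0`). -/
theorem stmt_10 (ρ T U : ℝ) (hρ : 0 < ρ) (hT : 0 < T) (M f : ℝ → ℝ)
    (hM : ∀ v, M v = ρ / Real.sqrt (2 * π * T) * Real.exp (-(v - U) ^ 2 / (2 * T)))
    (hfmeas : Measurable f) (hfpos : ∀ v, 0 ≤ f v)
    (hf : Integrable f) (hvf : Integrable (fun v => v * f v))
    (hv2f : Integrable (fun v => v ^ 2 * f v))
    (hflogf : Integrable (fun v => f v * Real.log (f v)))
    (hflogM : Integrable (fun v => f v * Real.log (M v)))
    (m0 : ∫ v : ℝ, f v = ρ) (m1 : ∫ v : ℝ, v * f v = ρ * U)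
    (m2 : ∫ v : ℝ, v ^ 2 * f v = ρ * U ^ 2 + ρ * T) :
    ∫ v : ℝ, M v * Real.log (M v) ≤ ∫ v : ℝ, f v * Real.log (f v) := by
  have hb : (0:ℝ) < (2 * T)⁻¹ := by positivity
  set c : ℝ := ρ / Real.sqrt (2 * π * T) with hcdef
  have h2πT : (0:ℝ) < 2 * π * T := by positivity
  have hsq : (0:ℝ) < Real.sqrt (2 * π * T) := Real.sqrt_pos.2 h2πT
  have hc : 0 < c := div_pos hρ hsq
  have hMe : ∀ v, M v = c * Real.exp (-(2 * T)⁻¹ * (v - U) ^ 2) := by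
    intro v
    rw [hM v, show -(v - U) ^ 2 / (2 * T) = -(2 * T)⁻¹ * (v - U) ^ 2 from by ring]
  have hMpos : ∀ v, 0 < M v := by
    intro v; rw [hMe v]; positivity
  have hcρ : c * Real.sqrt (2 * π * T) = ρ := div_mul_cancel₀ _ hsq.ne'
  have hsqrt : Real.sqrt (π / (2 * T)⁻¹) = Real.sqrt (2 * π * T) := by
    congr 1; field_simp
  -- shifted gaussian integrals
  have he_int : Integrable (fun v : ℝ => Real.exp (-(2 * T)⁻¹ * (v - U) ^ 2)) :=
    (integrable_exp_neg_mul_sq hb).comp_sub_right U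
  have he2_int : Integrable (fun v : ℝ => (v - U) ^ 2 * Real.exp (-(2 * T)⁻¹ * (v - U) ^ 2)) := by
    have := (integrable_rpow_mul_exp_neg_mul_sq hb (s := 2) (by norm_num)).comp_sub_right U
    simpa [Real.rpow_two] using this
  have I0 : ∫ v : ℝ, Real.exp (-(2 * T)⁻¹ * (v - U) ^ 2) = Real.sqrt (2 * π * T) := by
    rw [show (fun v : ℝ => Real.exp (-(2 * T)⁻¹ * (v - U) ^ 2)) =
        (fun v : ℝ => (fun x : ℝ => Real.exp (-(2 * T)⁻¹ * x ^ 2)) (v - U)) from rfl,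
      integral_sub_right_eq_self (fun x : ℝ => Real.exp (-(2 * T)⁻¹ * x ^ 2)) U,
      integral_gaussian, hsqrt]
  have I2 : ∫ v : ℝ, (v - U) ^ 2 * Real.exp (-(2 * T)⁻¹ * (v - U) ^ 2)
      = Real.sqrt (2 * π * T) * T := by
    rw [show (fun v : ℝ => (v - U) ^ 2 * Real.exp (-(2 * T)⁻¹ * (v - U) ^ 2)) =
        (fun v : ℝ => (fun x : ℝ => x ^ 2 * Real.exp (-(2 * T)⁻¹ * x ^ 2)) (v - U)) from rfl,
      integral_sub_right_eq_self (fun x : ℝ => x ^ 2 * Real.exp (-(2 * T)⁻¹ * x ^ 2)) U,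
      integral_sq_gaussian hb, hsqrt]
    rw [show (2 * (2 * T)⁻¹) = T⁻¹ from by field_simp]
    field_simp
  have hMint : Integrable M := by
    rw [show M = fun v => c * Real.exp (-(2 * T)⁻¹ * (v - U) ^ 2) from funext hMe]
    exact he_int.const_mul c
  have hIM : ∫ v : ℝ, M v = ρ := by
    rw [show M = fun v => c * Real.exp (-(2 * T)⁻¹ * (v - U) ^ 2) from funext hMe,
      integral_const_mul, I0, hcρ]
  have hlogM : ∀ v, Real.log (M v) = Real.log c - (2 * T)⁻¹ * (v - U) ^ 2 := by
    intro v
    rw [hMe v, Real.log_mul hc.ne' (Real.exp_pos _).ne', Real.log_exp]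
    ring
  -- second central moment of f
  have hJint : Integrable (fun v : ℝ => (v - U) ^ 2 * f v) := by
    have : (fun v : ℝ => (v - U) ^ 2 * f v)
        = fun v => v ^ 2 * f v - (2 * U) * (v * f v) + U ^ 2 * f v := by
      funext v; ring
    rw [this]
    exact (hv2f.sub (hvf.const_mul _)).add (hf.const_mul _)
  have hi1 : Integrable (fun v : ℝ => v ^ 2 * f v - 2 * U * (v * f v)) :=
    hv2f.sub (hvf.const_mul _)
  have hi2 : Integrable (fun v : ℝ => U ^ 2 * f v) := hf.const_mul _
  have hJ : ∫ v : ℝ, (v - U) ^ 2 * f v = ρ * T := by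
    rw [show (fun v : ℝ => (v - U) ^ 2 * f v)
        = fun v => v ^ 2 * f v - 2 * U * (v * f v) + U ^ 2 * f v from funext fun v => by ring,
      integral_add hi1 hi2, integral_sub hv2f (hvf.const_mul _)]
    simp only [integral_const_mul]
    rw [m0, m1, m2]; ring
  have hi3 : Integrable (fun v : ℝ => Real.log c * f v) := hf.const_mul _
  have hi4 : Integrable (fun v : ℝ => (2 * T)⁻¹ * ((v - U) ^ 2 * f v)) := hJint.const_mul _
  have hfM : ∫ v : ℝ, f v * Real.log (M v) = Real.log c * ρ - (2 * T)⁻¹ * (ρ * T) := by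
    rw [show (fun v : ℝ => f v * Real.log (M v))
        = fun v => Real.log c * f v - (2 * T)⁻¹ * ((v - U) ^ 2 * f v) from
        funext fun v => by rw [hlogM v]; ring,
      integral_sub hi3 hi4]
    simp only [integral_const_mul]
    rw [m0, hJ]
  have hi5 : Integrable (fun v : ℝ => Real.log c * (c * Real.exp (-(2 * T)⁻¹ * (v - U) ^ 2))) :=
    (he_int.const_mul c).const_mul (Real.log c)
  have hi6 : Integrable
      (fun v : ℝ => (2 * T)⁻¹ * c * ((v - U) ^ 2 * Real.exp (-(2 * T)⁻¹ * (v - U) ^ 2))) :=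
    he2_int.const_mul ((2 * T)⁻¹ * c)
  have hMM : ∫ v : ℝ, M v * Real.log (M v) = Real.log c * ρ - (2 * T)⁻¹ * (ρ * T) := by
    rw [show (fun v : ℝ => M v * Real.log (M v))
        = fun v => Real.log c * (c * Real.exp (-(2 * T)⁻¹ * (v - U) ^ 2))
            - (2 * T)⁻¹ * c * ((v - U) ^ 2 * Real.exp (-(2 * T)⁻¹ * (v - U) ^ 2)) from
        funext fun v => by rw [hlogM v, hMe v]; ring,
      integral_sub hi5 hi6]
    simp only [integral_const_mul]
    rw [I0, I2, ← hcρ]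
    ring
  have hkey : ∀ v, f v - M v ≤ f v * Real.log (f v) - f v * Real.log (M v) := by
    intro v
    rcases (hfpos v).eq_or_lt with h | h
    · rw [← h]; simpa using (hMpos v).le
    · have h1 : Real.log (M v / f v) ≤ M v / f v - 1 :=
        Real.log_le_sub_one_of_pos (div_pos (hMpos v) h)
      rw [Real.log_div (hMpos v).ne' h.ne'] at h1
      have h2 := mul_le_mul_of_nonneg_left h1 h.le
      rw [show f v * (M v / f v - 1) = M v - f v from by field_simp, mul_sub] at h2
      linarith
  have hint1 : Integrable (fun v : ℝ => f v - M v) := hf.sub hMint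
  have hint2 : Integrable (fun v : ℝ => f v * Real.log (f v) - f v * Real.log (M v)) :=
    hflogf.sub hflogM
  have hmono := integral_mono hint1 hint2 hkey
  rw [integral_sub hf hMint, integral_sub hflogf hflogM, m0, hIM] at hmono
  linarith [hfM, hMM, hmono]
end

section
/- Let c₀₀, c₁₀, c₀₁ ∈ ℝ and p(x,y) = c₀₀ + c₁₀·x + c₀₁·y, and let q(x,y) = c₀₀·x + (c₁₀/2)·x² + c₀₁·x·y. Let y₁ < y₂, set Δy = y₂ − y₁, and let ℓ, r : ℝ → ℝ be affine functions with ℓ(y) ≤ r(y) for all y ∈ [y₁, y₂]. Then for the trapezoid Ω = {(x,y) : y₁ ≤ y ≤ y₂, ℓ(y) ≤ x ≤ r(y)}, ∫∫_Ω p(x,y) dx dy = Δy·( ∫₀¹ q(r(y₁ + tΔy), y₁ + tΔy) dt − ∫₀¹ q(ℓ(y₁ + tΔy), y₁ + tΔy) dt ). -/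
open MeasureTheory intervalIntegral

/-- Exact integration of an affine polynomial `p(x,y) = c₀₀ + c₁₀x + c₀₁y` over a trapezoid
with horizontal sides at heights `y₁ < y₂` and affine left/right edges `ℓ, r`: via the
`x`-antiderivative `q` (with `∂q/∂x = p`), the area integral reduces to the two
edge contributions weighted by `Δy = y₂ − y₁`. -/
theorem stmt_14 (c00 c10 c01 y1 y2 : ℝ) (hy : y1 < y2) (l r : ℝ → ℝ)
    (hl : ∃ a b : ℝ, ∀ y, l y = a * y + b) (hr : ∃ a b : ℝ, ∀ y, r y = a * y + b)
    (hlr : ∀ y ∈ Set.Icc y1 y2, l y ≤ r y) :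
    let p : ℝ → ℝ → ℝ := fun x y => c00 + c10 * x + c01 * y
    let q : ℝ → ℝ → ℝ := fun x y => c00 * x + c10 / 2 * x ^ 2 + c01 * x * y
    let Δy : ℝ := y2 - y1
    let Ω : Set (ℝ × ℝ) := {xy | y1 ≤ xy.2 ∧ xy.2 ≤ y2 ∧ l xy.2 ≤ xy.1 ∧ xy.1 ≤ r xy.2}
    ∫ xy in Ω, p xy.1 xy.2 =
      Δy * ((∫ t in (0:ℝ)..1, q (r (y1 + t * Δy)) (y1 + t * Δy)) -
            (∫ t in (0:ℝ)..1, q (l (y1 + t * Δy)) (y1 + t * Δy))) := by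
  intro p q Δy Ω
  obtain ⟨al, bl, hL⟩ := hl
  obtain ⟨ar, br, hR⟩ := hr
  have hlc : Continuous l := by
    have : Continuous fun y => al * y + bl := by fun_prop
    simpa [funext hL] using this
  have hrc : Continuous r := by
    have : Continuous fun y => ar * y + br := by fun_prop
    simpa [funext hR] using this
  have hpc : Continuous fun xy : ℝ × ℝ => p xy.1 xy.2 := by
    simp only [p]; fun_prop
  -- Ω is closed
  have hΩc : IsClosed Ω := by
    have h1 : IsClosed {xy : ℝ × ℝ | y1 ≤ xy.2} := isClosed_le continuous_const continuous_snd
    have h2 : IsClosed {xy : ℝ × ℝ | xy.2 ≤ y2} := isClosed_le continuous_snd continuous_const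
    have h3 : IsClosed {xy : ℝ × ℝ | l xy.2 ≤ xy.1} :=
      isClosed_le (hlc.comp continuous_snd) continuous_fst
    have h4 : IsClosed {xy : ℝ × ℝ | xy.1 ≤ r xy.2} :=
      isClosed_le continuous_fst (hrc.comp continuous_snd)
    have : Ω = {xy : ℝ × ℝ | y1 ≤ xy.2} ∩ {xy : ℝ × ℝ | xy.2 ≤ y2} ∩
        {xy : ℝ × ℝ | l xy.2 ≤ xy.1} ∩ {xy : ℝ × ℝ | xy.1 ≤ r xy.2} := by
      ext xy; simp [Ω, and_assoc]
    rw [this]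
    exact ((h1.inter h2).inter h3).inter h4
  have hΩm : MeasurableSet Ω := hΩc.measurableSet
  -- Ω is bounded, hence p is integrable on Ω
  set m : ℝ := min (l y1) (l y2) with hm
  set M : ℝ := max (r y1) (r y2) with hM
  have hml : ∀ y ∈ Set.Icc y1 y2, m ≤ l y := by
    intro y hy'
    rcases le_total 0 al with h | h
    · calc m ≤ l y1 := min_le_left _ _
        _ ≤ l y := by rw [hL, hL]; nlinarith [hy'.1]
    · calc m ≤ l y2 := min_le_right _ _
        _ ≤ l y := by rw [hL, hL]; nlinarith [hy'.2]
  have hMr : ∀ y ∈ Set.Icc y1 y2, r y ≤ M := by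
    intro y hy'
    rcases le_total 0 ar with h | h
    · calc r y ≤ r y2 := by rw [hR, hR]; nlinarith [hy'.2]
        _ ≤ M := le_max_right _ _
    · calc r y ≤ r y1 := by rw [hR, hR]; nlinarith [hy'.1]
        _ ≤ M := le_max_left _ _
  have hΩsub : Ω ⊆ Set.Icc m M ×ˢ Set.Icc y1 y2 := by
    rintro ⟨x, y⟩ ⟨h1, h2, h3, h4⟩
    have hyI : y ∈ Set.Icc y1 y2 := ⟨h1, h2⟩
    exact ⟨⟨(hml y hyI).trans h3, h4.trans (hMr y hyI)⟩, hyI⟩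
  have hInt : IntegrableOn (fun xy : ℝ × ℝ => p xy.1 xy.2) Ω := by
    exact (hpc.continuousOn.integrableOn_compact (isCompact_Icc.prod isCompact_Icc)).mono_set hΩsub
  -- Fubini
  have hind : Integrable (Ω.indicator fun xy : ℝ × ℝ => p xy.1 xy.2) :=
    hInt.integrable_indicator hΩm
  have key : ∫ xy in Ω, p xy.1 xy.2 =
      ∫ y in Set.Icc y1 y2, (q (r y) y - q (l y) y) := by
    rw [← MeasureTheory.integral_indicator hΩm]
    rw [Measure.volume_eq_prod] at hind ⊢
    rw [MeasureTheory.integral_prod_symm _ hind]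
    have step : ∀ y : ℝ, (∫ x, Ω.indicator (fun xy : ℝ × ℝ => p xy.1 xy.2) (x, y)) =
        (Set.Icc y1 y2).indicator (fun y => q (r y) y - q (l y) y) y := by
      intro y
      by_cases hyI : y ∈ Set.Icc y1 y2
      · have : (fun x => Ω.indicator (fun xy : ℝ × ℝ => p xy.1 xy.2) (x, y)) =
            (Set.Icc (l y) (r y)).indicator (fun x => p x y) := by
          ext x
          by_cases hx : x ∈ Set.Icc (l y) (r y)
          · rw [Set.indicator_of_mem hx,
              Set.indicator_of_mem (show (x, y) ∈ Ω from ⟨hyI.1, hyI.2, hx.1, hx.2⟩)]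
          · rw [Set.indicator_of_notMem hx, Set.indicator_of_notMem]
            intro hmem
            exact hx ⟨hmem.2.2.1, hmem.2.2.2⟩
        rw [this, Set.indicator_of_mem hyI, MeasureTheory.integral_indicator measurableSet_Icc,
          MeasureTheory.integral_Icc_eq_integral_Ioc,
          ← intervalIntegral.integral_of_le (hlr y hyI)]
        have : (∫ x in (l y)..(r y), p x y) = q (r y) y - q (l y) y := by
          have hder : ∀ x : ℝ, HasDerivAt (fun x => q x y) (p x y) x := by
            intro x
            have : HasDerivAt (fun x => c00 * x + c10 / 2 * x ^ 2 + c01 * x * y)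
                (c00 + c10 * x + c01 * y) x := by
              have h1 : HasDerivAt (fun x : ℝ => c00 * x) c00 x := by
                simpa using (hasDerivAt_id x).const_mul c00
              have h2 : HasDerivAt (fun x : ℝ => c10 / 2 * x ^ 2) (c10 / 2 * (2 * x)) x := by
                simpa using (hasDerivAt_pow 2 x).const_mul (c10 / 2)
              have h3 : HasDerivAt (fun x : ℝ => c01 * x * y) (c01 * y) x := by
                have := ((hasDerivAt_id x).const_mul c01).mul_const y
                simpa [mul_comm, mul_assoc] using this
              have := (h1.add h2).add h3
              refine this.congr_deriv ?_
              ring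
            exact this
          refine intervalIntegral.integral_eq_sub_of_hasDerivAt (fun x _ => hder x) ?_
          exact (Continuous.intervalIntegrable (by simp only [p]; fun_prop) _ _)
        rw [this]
      · rw [Set.indicator_of_notMem hyI]
        have : (fun x => Ω.indicator (fun xy : ℝ × ℝ => p xy.1 xy.2) (x, y)) = fun _ => (0:ℝ) := by
          ext x
          rw [Set.indicator_of_notMem]
          intro hmem
          exact hyI ⟨hmem.1, hmem.2.1⟩
        rw [this]
        simp
    simp_rw [step]
    rw [MeasureTheory.integral_indicator measurableSet_Icc]
  rw [key]
  -- Substitution t ↦ y1 + t * Δy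
  have hΔ : Δy ≠ 0 := sub_ne_zero.mpr hy.ne'
  have hsub : ∀ f : ℝ → ℝ, (∫ t in (0:ℝ)..1, f (y1 + t * Δy)) = Δy⁻¹ • ∫ y in y1..y2, f y := by
    intro f
    have := intervalIntegral.integral_comp_add_mul f hΔ y1 (a := 0) (b := 1)
    simp only [mul_zero, add_zero, mul_one] at this
    have harg : ∀ t : ℝ, y1 + t * Δy = y1 + Δy * t := fun t => by ring
    simp_rw [harg]
    rw [this]
    norm_num [Δy]
  rw [hsub (fun y => q (r y) y), hsub (fun y => q (l y) y)]
  rw [MeasureTheory.integral_Icc_eq_integral_Ioc, ← intervalIntegral.integral_of_le hy.le]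
  have hcont : IntervalIntegrable (fun y => q (r y) y) volume y1 y2 := by
    apply Continuous.intervalIntegrable
    simp only [q]
    fun_prop
  have hcont' : IntervalIntegrable (fun y => q (l y) y) volume y1 y2 := by
    apply Continuous.intervalIntegrable
    simp only [q]
    fun_prop
  rw [intervalIntegral.integral_sub hcont hcont']
  rw [smul_eq_mul, smul_eq_mul]
  field_simp
end

section
/- Let Δx > 0, x_i ∈ ℝ, x_{i+1} = x_i + Δx, k ∈ ℕ, and let R_i(x) = Σ_{ℓ=0}^{k} a_ℓ·(x − x_i)^ℓ/ℓ! and R_{i+1}(x) = Σ_{ℓ=0}^{k} b_ℓ·(x − x_{i+1})^ℓ/ℓ! be polynomials with real coefficients a_ℓ, b_ℓ. Then for every θ ∈ [0, 1), (1/Δx)·( ∫_{x_i + (θ−1/2)Δx}^{x_i + Δx/2} R_i(x) dx + ∫_{x_i + Δx/2}^{x_i + (θ+1/2)Δx} R_{i+1}(x) dx ) = Σ_{ℓ=0}^{k} Δx^ℓ·( α_ℓ(θ)·a_ℓ + β_ℓ(θ)·b_ℓ ), where α_ℓ(θ) = (1 − (2θ−1)^{ℓ+1})/(2^{ℓ+1}(ℓ+1)!)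 and β_ℓ(θ) = ((2θ−1)^{ℓ+1} − (−1)^{ℓ+1})/(2^{ℓ+1}(ℓ+1)!). -/
open MeasureTheory intervalIntegral Finset

lemma aux_int (c A B : ℝ) (ℓ : ℕ) (coef : ℝ) :
    (∫ x in A..B, coef * (x - c) ^ ℓ / (ℓ.factorial : ℝ)) =
      coef * ((B - c) ^ (ℓ + 1) - (A - c) ^ (ℓ + 1)) / ((ℓ + 1) * (ℓ.factorial : ℝ)) := by
  have h : (∫ x in A..B, (x - c) ^ ℓ) = ((B - c) ^ (ℓ+1) - (A - c) ^ (ℓ+1)) / (ℓ + 1) := by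
    rw [intervalIntegral.integral_comp_sub_right (fun x => x ^ ℓ) c, integral_pow]
  have : (fun x => coef * (x - c) ^ ℓ / (ℓ.factorial : ℝ)) =
      fun x => (coef / (ℓ.factorial : ℝ)) * (x - c) ^ ℓ := by
    funext x; ring
  rw [this, intervalIntegral.integral_const_mul, h, div_mul_div_comm,
    mul_comm ((ℓ.factorial : ℝ)) ((ℓ : ℝ) + 1)]

/-- Sliding-average identity of the conservative reconstruction: the average over the window
of width `Δx` centered at `x_i + θΔx` of the piecewise polynomial equal to `R_i` on cell `i`
and `R_{i+1}` on cell `i+1` equals `Σ_ℓ Δx^ℓ (α_ℓ(θ)·a_ℓ + β_ℓ(θ)·b_ℓ)`. -/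
theorem stmt_16 (Δx : ℝ) (hΔx : 0 < Δx) (xi : ℝ) (k : ℕ) (a b : ℕ → ℝ)
    (θ : ℝ) (hθ : θ ∈ Set.Ico (0 : ℝ) 1) :
    let xip1 : ℝ := xi + Δx
    let Ri : ℝ → ℝ := fun x => ∑ ℓ ∈ Finset.range (k + 1), a ℓ * (x - xi) ^ ℓ / (ℓ.factorial : ℝ)
    let Rip1 : ℝ → ℝ :=
      fun x => ∑ ℓ ∈ Finset.range (k + 1), b ℓ * (x - xip1) ^ ℓ / (ℓ.factorial : ℝ)
    (1 / Δx) * ((∫ x in (xi + (θ - 1/2) * Δx)..(xi + Δx / 2), Ri x) +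
        (∫ x in (xi + Δx / 2)..(xi + (θ + 1/2) * Δx), Rip1 x)) =
      ∑ ℓ ∈ Finset.range (k + 1), Δx ^ ℓ *
        ((1 - (2 * θ - 1) ^ (ℓ + 1)) / (2 ^ (ℓ + 1) * ((ℓ + 1).factorial : ℝ)) * a ℓ +
         ((2 * θ - 1) ^ (ℓ + 1) - (-1 : ℝ) ^ (ℓ + 1)) /
            (2 ^ (ℓ + 1) * ((ℓ + 1).factorial : ℝ)) * b ℓ) := by
  intro xip1 Ri Rip1
  have hint1 : (∫ x in (xi + (θ - 1/2) * Δx)..(xi + Δx / 2), Ri x) =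
      ∑ ℓ ∈ Finset.range (k + 1),
        ∫ x in (xi + (θ - 1/2) * Δx)..(xi + Δx / 2), a ℓ * (x - xi) ^ ℓ / (ℓ.factorial : ℝ) := by
    apply intervalIntegral.integral_finset_sum
    intro ℓ _
    exact (Continuous.intervalIntegrable (by continuity) _ _)
  have hint2 : (∫ x in (xi + Δx / 2)..(xi + (θ + 1/2) * Δx), Rip1 x) =
      ∑ ℓ ∈ Finset.range (k + 1),
        ∫ x in (xi + Δx / 2)..(xi + (θ + 1/2) * Δx), b ℓ * (x - xip1) ^ ℓ / (ℓ.factorial : ℝ) := by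
    apply intervalIntegral.integral_finset_sum
    intro ℓ _
    exact (Continuous.intervalIntegrable (by continuity) _ _)
  rw [hint1, hint2, ← Finset.sum_add_distrib, Finset.mul_sum]
  refine Finset.sum_congr rfl fun ℓ _ => ?_
  rw [aux_int, aux_int]
  have hf : (ℓ.factorial : ℝ) ≠ 0 := Nat.cast_ne_zero.mpr ℓ.factorial_ne_zero
  have hl : ((ℓ : ℝ) + 1) ≠ 0 := by positivity
  have hΔ : Δx ≠ 0 := ne_of_gt hΔx
  have e1 : xi + Δx / 2 - xi = Δx / 2 := by ring
  have e2 : xi + (θ - 1/2) * Δx - xi = (2*θ - 1)/2 * Δx := by ring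
  have e3 : xi + Δx / 2 - xip1 = -(Δx / 2) := by simp only [xip1]; ring
  have e4 : xi + (θ + 1/2) * Δx - xip1 = (2*θ - 1)/2 * Δx := by simp only [xip1]; ring
  have e5 : ((2*θ - 1)/2 * Δx) ^ (ℓ+1) = (2*θ - 1) ^ (ℓ+1) * Δx ^ (ℓ+1) / 2 ^ (ℓ+1) := by
    rw [mul_pow, div_pow]; ring
  have e6 : (Δx / 2) ^ (ℓ+1) = Δx ^ (ℓ+1) / 2 ^ (ℓ+1) := by rw [div_pow]
  rw [e1, e2, e3, e4, Nat.factorial_succ, neg_pow (Δx / 2) (ℓ+1), e5, e6]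
  push_cast
  field_simp
  ring
end

section
/- Let N ≥ 1, Δx > 0, x_i = i·Δx for i ∈ ℤ, and let (R_i)_{i∈ℤ} be a family of continuous (e.g. polynomial) functions ℝ → ℝ that is N-periodic in the sense R_{i+N}(x) = R_i(x − N·Δx). Define the cell averages u_i = (1/Δx)∫_{x_i − Δx/2}^{x_i + Δx/2} R_i(x) dx and, for θ ∈ [0,1), the sliding averages Q_i(θ) = (1/Δx)·( ∫_{x_i + (θ−1/2)Δx}^{x_i + Δx/2} R_i(x) dx + ∫_{x_i + Δx/2}^{x_i + (θ+1/2)Δx} R_{i+1}(x) dx ). Then Σ_{i=0}^{N−1} Q_i(θ) = Σ_{i=0}^{N−1} u_i for every θ ∈ [0,1). -/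
open MeasureTheory intervalIntegral Finset

/-- Discrete conservation of the conservative semi-Lagrangian reconstruction with periodic
boundary conditions: for an `N`-periodic family of continuous cell polynomials `R_i`, the sum
of the sliding averages `Q_i(θ)` over one period equals the sum of the cell averages `u_i`,
for every shift `θ ∈ [0,1)`. -/
theorem stmt_17 (N : ℕ) (hN : 1 ≤ N) (Δx : ℝ) (hΔx : 0 < Δx)
    (R : ℤ → ℝ → ℝ) (hcont : ∀ i, Continuous (R i))
    (hper : ∀ (i : ℤ) (x : ℝ), R (i + (N : ℤ)) x = R i (x - (N : ℝ) * Δx))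
    (θ : ℝ) (hθ : θ ∈ Set.Ico (0 : ℝ) 1) :
    (∑ i ∈ Finset.range N, (1 / Δx) *
        ((∫ x in ((i : ℝ) * Δx + (θ - 1/2) * Δx)..((i : ℝ) * Δx + Δx / 2), R (i : ℤ) x) +
         (∫ x in ((i : ℝ) * Δx + Δx / 2)..((i : ℝ) * Δx + (θ + 1/2) * Δx), R ((i : ℤ) + 1) x)))
      = ∑ i ∈ Finset.range N, (1 / Δx) *
          ∫ x in ((i : ℝ) * Δx - Δx / 2)..((i : ℝ) * Δx + Δx / 2), R (i : ℤ) x := by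
  have hint : ∀ (i : ℤ) (a b : ℝ), IntervalIntegrable (R i) volume a b :=
    fun i a b => (hcont i).intervalIntegrable a b
  set h : ℕ → ℝ := fun i =>
    (1 / Δx) * ∫ x in ((i : ℝ) * Δx - Δx / 2)..((i : ℝ) * Δx + (θ - 1/2) * Δx), R (i : ℤ) x
    with hh
  have key : ∀ i ∈ Finset.range N,
      (1 / Δx) *
        ((∫ x in ((i : ℝ) * Δx + (θ - 1/2) * Δx)..((i : ℝ) * Δx + Δx / 2), R (i : ℤ) x) +
         (∫ x in ((i : ℝ) * Δx + Δx / 2)..((i : ℝ) * Δx + (θ + 1/2) * Δx), R ((i : ℤ) + 1) x))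
      = ((1 / Δx) *
          ∫ x in ((i : ℝ) * Δx - Δx / 2)..((i : ℝ) * Δx + Δx / 2), R (i : ℤ) x)
        + (h (i + 1) - h i) := by
    intro i _
    have h1 : (∫ x in ((i : ℝ) * Δx - Δx / 2)..((i : ℝ) * Δx + (θ - 1/2) * Δx), R (i : ℤ) x)
        + (∫ x in ((i : ℝ) * Δx + (θ - 1/2) * Δx)..((i : ℝ) * Δx + Δx / 2), R (i : ℤ) x)
        = ∫ x in ((i : ℝ) * Δx - Δx / 2)..((i : ℝ) * Δx + Δx / 2), R (i : ℤ) x :=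
      intervalIntegral.integral_add_adjacent_intervals (hint _ _ _) (hint _ _ _)
    have ea : ((i : ℝ) + 1) * Δx - Δx / 2 = (i : ℝ) * Δx + Δx / 2 := by ring
    have eb : ((i : ℝ) + 1) * Δx + (θ - 1/2) * Δx = (i : ℝ) * Δx + (θ + 1/2) * Δx := by ring
    have h2 : h (i + 1)
        = (1 / Δx) *
          ∫ x in ((i : ℝ) * Δx + Δx / 2)..((i : ℝ) * Δx + (θ + 1/2) * Δx), R ((i : ℤ) + 1) x := by
      simp only [hh, Nat.cast_add, Nat.cast_one, ea, eb]
    rw [h2, hh]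
    simp only []
    rw [← h1]
    ring
  rw [Finset.sum_congr rfl key, Finset.sum_add_distrib, Finset.sum_range_sub]
  have hgN : h N = h 0 := by
    have hR : ∀ x, R (N : ℤ) x = R 0 (x - (N : ℝ) * Δx) := by
      intro x
      have := hper 0 x
      simpa using this
    simp only [hh, Nat.cast_zero]
    rw [intervalIntegral.integral_congr (g := fun x => R 0 (x - (N : ℝ) * Δx))
      (fun x _ => hR x)]
    rw [intervalIntegral.integral_comp_sub_right (R 0) ((N : ℝ) * Δx)]
    norm_num
  rw [hgN]
  ring
end

section
/- Let J be a nonempty finite index set, v : J → ℝ, Δv > 0, λ > 0, and g : J → ℝ. Define ρ = Σ_j g_j·Δv, and assume ρ > 0; define U = (Σ_j v_j·g_j·Δv)/ρ and T = (Σ_j (v_j − U)²·g_j·Δv)/ρ, and assume T > 0. Let M_j = ρ/√(2πT)·exp(−(v_j − U)²/(2T)), and assume the quadrature-exactness conditions Σ_j M_j·Δv = ρ, Σ_j v_j·M_j·Δv = ρU and Σ_j v_j²·M_j·Δv = Σ_j v_j²·g_j·Δv. Then f := (g + λ·M)/(1 + λ) satisfies: (i) Σ_j f_j·Δv = ρ,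 Σ_j v_j·f_j·Δv = ρU and Σ_j v_j²·f_j·Δv = Σ_j v_j²·g_j·Δv (the discrete mass, momentum and energy of f equal those of g); (ii) the discrete Maxwellian built from the moments of f coincides with M, so f solves the implicit relaxation equation f = g + λ·(M(f) − f) componentwise. -/
open Real Finset

/-- Explicit solvability of the implicit relaxation step of the semi-Lagrangian BGK scheme:
with `λ = Δt/ε`, the convex combination `f = (g + λM)/(1 + λ)` of the transported data `g`
and the discrete Maxwellian `M` built from the moments of `g` (assuming quadrature
exactness of the moments of `M`) has the same discrete mass, momentum and energy as `g`;
moreover the discrete Maxwellian built from the moments of `f` coincides with `M`, so `f`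
solves `f = g + λ(M(f) − f)` componentwise. -/
theorem stmt_18 {J : Type*} [Fintype J] [Nonempty J]
    (v : J → ℝ) (Δv lam : ℝ) (hΔv : 0 < Δv) (hlam : 0 < lam) (g : J → ℝ)
    (ρ : ℝ) (hρdef : ρ = ∑ j, g j * Δv) (hρpos : 0 < ρ)
    (U : ℝ) (hU : U = (∑ j, v j * g j * Δv) / ρ)
    (T : ℝ) (hT : T = (∑ j, (v j - U) ^ 2 * g j * Δv) / ρ) (hTpos : 0 < T)
    (M : J → ℝ)
    (hM : ∀ j, M j = ρ / Real.sqrt (2 * π * T) * Real.exp (-(v j - U) ^ 2 / (2 * T)))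
    (hq1 : ∑ j, M j * Δv = ρ)
    (hq2 : ∑ j, v j * M j * Δv = ρ * U)
    (hq3 : ∑ j, (v j) ^ 2 * M j * Δv = ∑ j, (v j) ^ 2 * g j * Δv)
    (f : J → ℝ) (hf : ∀ j, f j = (g j + lam * M j) / (1 + lam)) :
    ((∑ j, f j * Δv = ρ) ∧ (∑ j, v j * f j * Δv = ρ * U) ∧
      (∑ j, (v j) ^ 2 * f j * Δv = ∑ j, (v j) ^ 2 * g j * Δv)) ∧
    (let ρf : ℝ := ∑ j, f j * Δv
     let Uf : ℝ := (∑ j, v j * f j * Δv) / ρf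
     let Tf : ℝ := (∑ j, (v j - Uf) ^ 2 * f j * Δv) / ρf
     let Mf : J → ℝ := fun j => ρf / Real.sqrt (2 * π * Tf) * Real.exp (-(v j - Uf) ^ 2 / (2 * Tf))
     (∀ j, Mf j = M j) ∧ ∀ j, f j = g j + lam * (Mf j - f j)) := by
  have hρ0 : ρ ≠ 0 := ne_of_gt hρpos
  have h1l : (1 : ℝ) + lam ≠ 0 := by positivity
  have hmass : ∑ j, f j * Δv = ρ := by
    have h : ∑ j, f j * Δv = ((∑ j, g j * Δv) + lam * ∑ j, M j * Δv) / (1 + lam) := by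
      rw [Finset.mul_sum, ← Finset.sum_add_distrib, Finset.sum_div]
      exact Finset.sum_congr rfl fun j _ => by rw [hf]; field_simp
    rw [h, ← hρdef, hq1]; field_simp
  have hmom : ∑ j, v j * f j * Δv = ρ * U := by
    have h : ∑ j, v j * f j * Δv
        = ((∑ j, v j * g j * Δv) + lam * ∑ j, v j * M j * Δv) / (1 + lam) := by
      rw [Finset.mul_sum, ← Finset.sum_add_distrib, Finset.sum_div]
      exact Finset.sum_congr rfl fun j _ => by rw [hf]; field_simp
    have hg : ∑ j, v j * g j * Δv = ρ * U := by rw [hU]; field_simp; exact Finset.sum_congr rfl fun j _ => by ring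
    rw [h, hg, hq2]; field_simp
  have hen : ∑ j, (v j) ^ 2 * f j * Δv = ∑ j, (v j) ^ 2 * g j * Δv := by
    have h : ∑ j, (v j) ^ 2 * f j * Δv
        = ((∑ j, (v j) ^ 2 * g j * Δv) + lam * ∑ j, (v j) ^ 2 * M j * Δv) / (1 + lam) := by
      rw [Finset.mul_sum, ← Finset.sum_add_distrib, Finset.sum_div]
      exact Finset.sum_congr rfl fun j _ => by rw [hf]; field_simp
    rw [h, hq3, div_eq_iff h1l]; ring
  refine ⟨⟨hmass, hmom, hen⟩, ?_⟩
  intro ρf Uf Tf Mf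
  have hρf : ρf = ρ := hmass
  have hUf : Uf = U := by simp only [Uf, hρf, hmom]; field_simp
  have expand : ∀ h : J → ℝ, ∑ j, (v j - U) ^ 2 * h j * Δv
      = (∑ j, (v j) ^ 2 * h j * Δv) - 2 * U * (∑ j, v j * h j * Δv)
        + U ^ 2 * ∑ j, h j * Δv := by
    intro h
    rw [Finset.mul_sum, Finset.mul_sum, ← Finset.sum_sub_distrib, ← Finset.sum_add_distrib]
    exact Finset.sum_congr rfl fun j _ => by ring
  have hTf : Tf = T := by
    have hg : ∑ j, (v j - U) ^ 2 * g j * Δv = ρ * T := by rw [hT]; field_simp; exact Finset.sum_congr rfl fun j _ => by ring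
    have hmg : ∑ j, v j * g j * Δv = ρ * U := by rw [hU]; field_simp; exact Finset.sum_congr rfl fun j _ => by ring
    have hkey : ∑ j, (v j - U) ^ 2 * g j * Δv
        = (∑ j, (v j) ^ 2 * g j * Δv) - 2 * U * (ρ * U) + U ^ 2 * ρ := by
      rw [expand, hmg, ← hρdef]
    simp only [Tf, hUf, hρf, expand, hmass, hmom, hen]
    rw [← hkey, hg]
    field_simp
  have hMf : ∀ j, Mf j = M j := by
    intro j
    simp only [Mf, hρf, hUf, hTf, hM j]
  refine ⟨hMf, fun j => ?_⟩
  rw [hMf j, hf j]; field_simp; ring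
end
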